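/- The set of λ∈ℂ for which there exists a nonzero function f:Γ→ℂ with f(x_i)=0 for 1≤i≤4 and −Δf(y_i)=λ f(y_i) for all 0≤i≤6 (the Dirichlet eigenvalues of −Δ on Γ) is exactly {1,2,4,5,6}. -/

import Mathlib

noncomputable section

namespace SGpaper

/-- The eleven vertices of the graph `Γ`. -/
inductive GammaV : Type
  | x1 | x2 | x3 | x4 | y0 | y1 | y2 | y3 | y4 | y5 | y6
  deriving DecidableEq

open GammaV

instance : Fintype GammaV where
  elems := {x1, x2, x3, x4, y0, y1, y2, y3, y4, y5, y6}
  complete := fun x => by cases x <;> simp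

/-- The six small triangles (cells) of `Γ`. -/
def cells : List (List GammaV) :=
  [[x1, y1, y5], [y1, y0, y4], [y5, y4, x4], [y0, y2, y3], [y2, x2, y6], [y3, y6, x3]]

/-- Adjacency in `Γ`: two distinct vertices lying in a common small triangle. -/
def adjG (a b : GammaV) : Prop :=
  a ≠ b ∧ ∃ c ∈ cells, a ∈ c ∧ b ∈ c

instance : DecidableRel adjG := fun _ _ => by unfold adjG; infer_instance

/-- The graph Laplacian on `Γ`: `Δf(v) = Σ_{z ∼ v} f(z) - 4 f(v)`. -/
def laplG (f : GammaV → ℂ) (v : GammaV) : ℂ :=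
  (∑ z ∈ Finset.univ.filter (fun z => adjG v z), f z) - 4 * f v

/-- The coarse Laplacian at `y₀`: `Δ_{(-1)}f(y₀) = f(x₁)+f(x₂)+f(x₃)+f(x₄) - 4 f(y₀)`. -/
def laplG1 (f : GammaV → ℂ) : ℂ :=
  f x1 + f x2 + f x3 + f x4 - 4 * f y0

/-- The list `y₀, y₁, …, y₆`. -/
def yv : Fin 7 → GammaV
  | 0 => y0 | 1 => y1 | 2 => y2 | 3 => y3 | 4 => y4 | 5 => y5 | 6 => y6

/-- The list `x₁, …, x₄`. -/
def xv : Fin 4 → GammaV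
  | 0 => x1 | 1 => x2 | 2 => x3 | 3 => x4

/-- The spectral decimation polynomial `R(λ) = λ(5-λ)`. -/
def R : ℂ → ℂ := fun z => z * (5 - z)

open GammaV

lemma lapl0 (f : GammaV → ℂ) : laplG f y0 = f y1 + f y2 + f y3 + f y4 - 4 * f y0 := by
  unfold laplG
  rw [show Finset.univ.filter (fun z => adjG y0 z) = ({y1, y2, y3, y4} : Finset GammaV) from by decide]
  simp [Finset.sum_insert, Finset.mem_insert]
  ring

lemma lapl1 (f : GammaV → ℂ) : laplG f y1 = f x1 + f y5 + f y0 + f y4 - 4 * f y1 := by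
  unfold laplG
  rw [show Finset.univ.filter (fun z => adjG y1 z) = ({x1, y0, y4, y5} : Finset GammaV) from by decide]
  simp [Finset.sum_insert, Finset.mem_insert]
  ring

lemma lapl2 (f : GammaV → ℂ) : laplG f y2 = f y0 + f y3 + f x2 + f y6 - 4 * f y2 := by
  unfold laplG
  rw [show Finset.univ.filter (fun z => adjG y2 z) = ({x2, y0, y3, y6} : Finset GammaV) from by decide]
  simp [Finset.sum_insert, Finset.mem_insert]
  ring

lemma lapl3 (f : GammaV → ℂ) : laplG f y3 = f y0 + f y2 + f y6 + f x3 - 4 * f y3 := by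
  unfold laplG
  rw [show Finset.univ.filter (fun z => adjG y3 z) = ({x3, y0, y2, y6} : Finset GammaV) from by decide]
  simp [Finset.sum_insert, Finset.mem_insert]
  ring

lemma lapl4 (f : GammaV → ℂ) : laplG f y4 = f y1 + f y0 + f y5 + f x4 - 4 * f y4 := by
  unfold laplG
  rw [show Finset.univ.filter (fun z => adjG y4 z) = ({x4, y0, y1, y5} : Finset GammaV) from by decide]
  simp [Finset.sum_insert, Finset.mem_insert]
  ring

lemma lapl5 (f : GammaV → ℂ) : laplG f y5 = f x1 + f y1 + f y4 + f x4 - 4 * f y5 := by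
  unfold laplG
  rw [show Finset.univ.filter (fun z => adjG y5 z) = ({x1, x4, y1, y4} : Finset GammaV) from by decide]
  simp [Finset.sum_insert, Finset.mem_insert]
  ring

lemma lapl6 (f : GammaV → ℂ) : laplG f y6 = f y2 + f x2 + f y3 + f x3 - 4 * f y6 := by
  unfold laplG
  rw [show Finset.univ.filter (fun z => adjG y6 z) = ({x2, x3, y2, y3} : Finset GammaV) from by decide]
  simp [Finset.sum_insert, Finset.mem_insert]
  ring


open GammaV in
/-- The Dirichlet eigenvalues of `-Δ` on `Γ` (those `λ ∈ ℂ` admitting a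
nonzero `f` vanishing at `x₁,…,x₄` with `-Δf(yᵢ) = λ f(yᵢ)` for `0 ≤ i ≤ 6`)
are exactly `{1,2,4,5,6}`. -/
theorem dirichlet_eigenvalues :
    {lam : ℂ | ∃ f : GammaV → ℂ, f ≠ 0 ∧ (∀ i : Fin 4, f (xv i) = 0) ∧
      ∀ i : Fin 7, -laplG f (yv i) = lam * f (yv i)} = {1, 2, 4, 5, 6} := by
  ext lam
  simp only [Set.mem_setOf_eq, Set.mem_insert_iff, Set.mem_singleton_iff]
  constructor
  · rintro ⟨f, hf, hx, h⟩
    by_contra hc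
    push_neg at hc
    obtain ⟨n1, n2, n4, n5, n6⟩ := hc
    have hx1 : f x1 = 0 := hx 0
    have hx2 : f x2 = 0 := hx 1
    have hx3 : f x3 = 0 := hx 2
    have hx4 : f x4 = 0 := hx 3
    have h0 : (4 - lam) * f y0 - (f y1 + f y2 + f y3 + f y4) = 0 := by
      have t := h 0
      rw [show yv 0 = y0 from rfl, lapl0] at t
      linear_combination t
    have h1 : (4 - lam) * f y1 - (f y5 + f y0 + f y4) = 0 := by
      have t := h 1
      rw [show yv 1 = y1 from rfl, lapl1] at t
      linear_combination t + hx1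
    have h2 : (4 - lam) * f y2 - (f y0 + f y3 + f y6) = 0 := by
      have t := h 2
      rw [show yv 2 = y2 from rfl, lapl2] at t
      linear_combination t + hx2
    have h3 : (4 - lam) * f y3 - (f y0 + f y2 + f y6) = 0 := by
      have t := h 3
      rw [show yv 3 = y3 from rfl, lapl3] at t
      linear_combination t + hx3
    have h4 : (4 - lam) * f y4 - (f y1 + f y0 + f y5) = 0 := by
      have t := h 4
      rw [show yv 4 = y4 from rfl, lapl4] at t
      linear_combination t + hx4
    have h5 : (4 - lam) * f y5 - (f y1 + f y4) = 0 := by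
      have t := h 5
      rw [show yv 5 = y5 from rfl, lapl5] at t
      linear_combination t + hx1 + hx4
    have h6 : (4 - lam) * f y6 - (f y2 + f y3) = 0 := by
      have t := h 6
      rw [show yv 6 = y6 from rfl, lapl6] at t
      linear_combination t + hx2 + hx3
    have e0 : (lam-1)*(lam-2)*(lam-4)*(lam-5)^3*(lam-6) * f (yv 0) = 0 := by
      rw [show yv 0 = y0 from rfl]
      linear_combination ((-2500:ℂ) + (4500:ℂ)*lam + (-3225:ℂ)*lam^2 + (1180:ℂ)*lam^3 + (-234:ℂ)*lam^4 + (24:ℂ)*lam^5 + (-1:ℂ)*lam^6) * h0 + ((-1000:ℂ) + (1350:ℂ)*lam + (-695:ℂ)*lam^2 + (173:ℂ)*lam^3 + (-21:ℂ)*lam^4 + (1:ℂ)*lam^5) * h1 + ((-1000:ℂ) + (1350:ℂ)*lam + (-695:ℂ)*lam^2 + (173:ℂ)*lam^3 + (-21:ℂ)*lam^4 + (1:ℂ)*lam^5) * h2 + ((-1000:ℂ) + (1350:ℂ)*lam + (-695:ℂ)*lam^2 + (173:ℂ)*lam^3 + (-21:ℂ)*lam^4 + (1:ℂ)*lam^5)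 * h3 + ((-1000:ℂ) + (1350:ℂ)*lam + (-695:ℂ)*lam^2 + (173:ℂ)*lam^3 + (-21:ℂ)*lam^4 + (1:ℂ)*lam^5) * h4 + ((-500:ℂ) + (550:ℂ)*lam + (-210:ℂ)*lam^2 + (34:ℂ)*lam^3 + (-2:ℂ)*lam^4) * h5 + ((-500:ℂ) + (550:ℂ)*lam + (-210:ℂ)*lam^2 + (34:ℂ)*lam^3 + (-2:ℂ)*lam^4) * h6
    have e1 : (lam-1)*(lam-2)*(lam-4)*(lam-5)^3*(lam-6) * f (yv 1) = 0 := by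
      rw [show yv 1 = y1 from rfl]
      linear_combination ((-1000:ℂ) + (1350:ℂ)*lam + (-695:ℂ)*lam^2 + (173:ℂ)*lam^3 + (-21:ℂ)*lam^4 + (1:ℂ)*lam^5) * h0 + ((-2200:ℂ) + (4230:ℂ)*lam + (-3128:ℂ)*lam^2 + (1164:ℂ)*lam^3 + (-233:ℂ)*lam^4 + (24:ℂ)*lam^5 + (-1:ℂ)*lam^6) * h1 + ((-400:ℂ) + (360:ℂ)*lam + (-121:ℂ)*lam^2 + (18:ℂ)*lam^3 + (-1:ℂ)*lam^4) * h2 + ((-400:ℂ) + (360:ℂ)*lam + (-121:ℂ)*lam^2 + (18:ℂ)*lam^3 + (-1:ℂ)*lam^4) * h3 + ((-1000:ℂ) + (1450:ℂ)*lam + (-760:ℂ)*lam^2 + (187:ℂ)*lam^3 + (-22:ℂ)*lam^4 + (1:ℂ)*lam^5) * h4 + ((-800:ℂ) + (1220:ℂ)*lam + (-667:ℂ)*lam^2 + (171:ℂ)*lam^3 + (-21:ℂ)*lam^4 + (1:ℂ)*lam^5) * h5 + ((-200:ℂ) + (130:ℂ)*lam + (-28:ℂ)*lam^2 + (2:ℂ)*lam^3)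 * h6
    have e2 : (lam-1)*(lam-2)*(lam-4)*(lam-5)^3*(lam-6) * f (yv 2) = 0 := by
      rw [show yv 2 = y2 from rfl]
      linear_combination ((-1000:ℂ) + (1350:ℂ)*lam + (-695:ℂ)*lam^2 + (173:ℂ)*lam^3 + (-21:ℂ)*lam^4 + (1:ℂ)*lam^5) * h0 + ((-400:ℂ) + (360:ℂ)*lam + (-121:ℂ)*lam^2 + (18:ℂ)*lam^3 + (-1:ℂ)*lam^4) * h1 + ((-2200:ℂ) + (4230:ℂ)*lam + (-3128:ℂ)*lam^2 + (1164:ℂ)*lam^3 + (-233:ℂ)*lam^4 + (24:ℂ)*lam^5 + (-1:ℂ)*lam^6) * h2 + ((-1000:ℂ) + (1450:ℂ)*lam + (-760:ℂ)*lam^2 + (187:ℂ)*lam^3 + (-22:ℂ)*lam^4 + (1:ℂ)*lam^5) * h3 + ((-400:ℂ) + (360:ℂ)*lam + (-121:ℂ)*lam^2 + (18:ℂ)*lam^3 + (-1:ℂ)*lam^4) * h4 + ((-200:ℂ) + (130:ℂ)*lam + (-28:ℂ)*lam^2 + (2:ℂ)*lam^3) * h5 + ((-800:ℂ) + (1220:ℂ)*lam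 + (-667:ℂ)*lam^2 + (171:ℂ)*lam^3 + (-21:ℂ)*lam^4 + (1:ℂ)*lam^5) * h6
    have e3 : (lam-1)*(lam-2)*(lam-4)*(lam-5)^3*(lam-6) * f (yv 3) = 0 := by
      rw [show yv 3 = y3 from rfl]
      linear_combination ((-1000:ℂ) + (1350:ℂ)*lam + (-695:ℂ)*lam^2 + (173:ℂ)*lam^3 + (-21:ℂ)*lam^4 + (1:ℂ)*lam^5) * h0 + ((-400:ℂ) + (360:ℂ)*lam + (-121:ℂ)*lam^2 + (18:ℂ)*lam^3 + (-1:ℂ)*lam^4) * h1 + ((-1000:ℂ) + (1450:ℂ)*lam + (-760:ℂ)*lam^2 + (187:ℂ)*lam^3 + (-22:ℂ)*lam^4 + (1:ℂ)*lam^5) * h2 + ((-2200:ℂ) + (4230:ℂ)*lam + (-3128:ℂ)*lam^2 + (1164:ℂ)*lam^3 + (-233:ℂ)*lam^4 + (24:ℂ)*lam^5 + (-1:ℂ)*lam^6) * h3 + ((-400:ℂ) + (360:ℂ)*lam + (-121:ℂ)*lam^2 + (18:ℂ)*lam^3 + (-1:ℂ)*lam^4) * h4 + ((-200:ℂ) +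 (130:ℂ)*lam + (-28:ℂ)*lam^2 + (2:ℂ)*lam^3) * h5 + ((-800:ℂ) + (1220:ℂ)*lam + (-667:ℂ)*lam^2 + (171:ℂ)*lam^3 + (-21:ℂ)*lam^4 + (1:ℂ)*lam^5) * h6
    have e4 : (lam-1)*(lam-2)*(lam-4)*(lam-5)^3*(lam-6) * f (yv 4) = 0 := by
      rw [show yv 4 = y4 from rfl]
      linear_combination ((-1000:ℂ) + (1350:ℂ)*lam + (-695:ℂ)*lam^2 + (173:ℂ)*lam^3 + (-21:ℂ)*lam^4 + (1:ℂ)*lam^5) * h0 + ((-1000:ℂ) + (1450:ℂ)*lam + (-760:ℂ)*lam^2 + (187:ℂ)*lam^3 + (-22:ℂ)*lam^4 + (1:ℂ)*lam^5) * h1 + ((-400:ℂ) + (360:ℂ)*lam + (-121:ℂ)*lam^2 + (18:ℂ)*lam^3 + (-1:ℂ)*lam^4) * h2 + ((-400:ℂ) + (360:ℂ)*lam + (-121:ℂ)*lam^2 + (18:ℂ)*lam^3 + (-1:ℂ)*lam^4) * h3 + ((-2200:ℂ) + (4230:ℂ)*lam + (-3128:ℂ)*lam^2 + (1164:ℂ)*lam^3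 + (-233:ℂ)*lam^4 + (24:ℂ)*lam^5 + (-1:ℂ)*lam^6) * h4 + ((-800:ℂ) + (1220:ℂ)*lam + (-667:ℂ)*lam^2 + (171:ℂ)*lam^3 + (-21:ℂ)*lam^4 + (1:ℂ)*lam^5) * h5 + ((-200:ℂ) + (130:ℂ)*lam + (-28:ℂ)*lam^2 + (2:ℂ)*lam^3) * h6
    have e5 : (lam-1)*(lam-2)*(lam-4)*(lam-5)^3*(lam-6) * f (yv 5) = 0 := by
      rw [show yv 5 = y5 from rfl]
      linear_combination ((-500:ℂ) + (550:ℂ)*lam + (-210:ℂ)*lam^2 + (34:ℂ)*lam^3 + (-2:ℂ)*lam^4) * h0 + ((-800:ℂ) + (1220:ℂ)*lam + (-667:ℂ)*lam^2 + (171:ℂ)*lam^3 + (-21:ℂ)*lam^4 + (1:ℂ)*lam^5) * h1 + ((-200:ℂ) + (130:ℂ)*lam + (-28:ℂ)*lam^2 + (2:ℂ)*lam^3) * h2 + ((-200:ℂ) + (130:ℂ)*lam + (-28:ℂ)*lam^2 + (2:ℂ)*lam^3) * h3 + ((-800:ℂ) + (1220:ℂ)*lam + (-667:ℂ)*lam^2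 + (171:ℂ)*lam^3 + (-21:ℂ)*lam^4 + (1:ℂ)*lam^5) * h4 + ((-1900:ℂ) + (3910:ℂ)*lam + (-3011:ℂ)*lam^2 + (1146:ℂ)*lam^3 + (-232:ℂ)*lam^4 + (24:ℂ)*lam^5 + (-1:ℂ)*lam^6) * h5 + ((-100:ℂ) + (40:ℂ)*lam + (-4:ℂ)*lam^2) * h6
    have e6 : (lam-1)*(lam-2)*(lam-4)*(lam-5)^3*(lam-6) * f (yv 6) = 0 := by
      rw [show yv 6 = y6 from rfl]
      linear_combination ((-500:ℂ) + (550:ℂ)*lam + (-210:ℂ)*lam^2 + (34:ℂ)*lam^3 + (-2:ℂ)*lam^4) * h0 + ((-200:ℂ) + (130:ℂ)*lam + (-28:ℂ)*lam^2 + (2:ℂ)*lam^3) * h1 + ((-800:ℂ) + (1220:ℂ)*lam + (-667:ℂ)*lam^2 + (171:ℂ)*lam^3 + (-21:ℂ)*lam^4 + (1:ℂ)*lam^5) * h2 + ((-800:ℂ) + (1220:ℂ)*lam + (-667:ℂ)*lam^2 + (171:ℂ)*lam^3 + (-21:ℂ)*lam^4 + (1:ℂ)*lam^5) * h3 + ((-200:ℂ)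 + (130:ℂ)*lam + (-28:ℂ)*lam^2 + (2:ℂ)*lam^3) * h4 + ((-100:ℂ) + (40:ℂ)*lam + (-4:ℂ)*lam^2) * h5 + ((-1900:ℂ) + (3910:ℂ)*lam + (-3011:ℂ)*lam^2 + (1146:ℂ)*lam^3 + (-232:ℂ)*lam^4 + (24:ℂ)*lam^5 + (-1:ℂ)*lam^6) * h6
    have hP : (lam-1)*(lam-2)*(lam-4)*(lam-5)^3*(lam-6) ≠ 0 := by
      apply mul_ne_zero; apply mul_ne_zero; apply mul_ne_zero; apply mul_ne_zero
      · exact sub_ne_zero.mpr n1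
      · exact sub_ne_zero.mpr n2
      · exact sub_ne_zero.mpr n4
      · exact pow_ne_zero _ (sub_ne_zero.mpr n5)
      · exact sub_ne_zero.mpr n6
    apply hf
    funext v
    have z0 := (mul_eq_zero.mp e0).resolve_left hP
    have z1 := (mul_eq_zero.mp e1).resolve_left hP
    have z2 := (mul_eq_zero.mp e2).resolve_left hP
    have z3 := (mul_eq_zero.mp e3).resolve_left hP
    have z4 := (mul_eq_zero.mp e4).resolve_left hP
    have z5 := (mul_eq_zero.mp e5).resolve_left hP
    have z6 := (mul_eq_zero.mp e6).resolve_left hP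
    simp only [yv] at z0 z1 z2 z3 z4 z5 z6
    cases v <;> simp [hx1, hx2, hx3, hx4, z0, z1, z2, z3, z4, z5, z6]
  · intro hlam
    rcases hlam with h|h|h|h|h <;> subst h
    · refine ⟨fun v => match v with | x1 => (0:ℂ) | x2 => (0:ℂ) | x3 => (0:ℂ) | x4 => (0:ℂ) | y0 => (4:ℂ) | y1 => (3:ℂ) | y2 => (3:ℂ) | y3 => (3:ℂ) | y4 => (3:ℂ) | y5 => (2:ℂ) | y6 => (2:ℂ), ?_, ?_, ?_⟩
      · intro hzero
        have := congrFun hzero y0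
        norm_num at this
      · intro i; fin_cases i <;> rfl
      · intro i; fin_cases i <;>
          simp only [yv, lapl0, lapl1, lapl2, lapl3, lapl4, lapl5, lapl6] <;> norm_num
    · refine ⟨fun v => match v with | x1 => (0:ℂ) | x2 => (0:ℂ) | x3 => (0:ℂ) | x4 => (0:ℂ) | y0 => (0:ℂ) | y1 => (-1:ℂ) | y2 => (1:ℂ) | y3 => (1:ℂ) | y4 => (-1:ℂ) | y5 => (-1:ℂ) | y6 => (1:ℂ), ?_, ?_, ?_⟩
      · intro hzero
        have := congrFun hzero y2
        norm_num at this
      · intro i; fin_cases i <;> rfl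
      · intro i; fin_cases i <;>
          simp only [yv, lapl0, lapl1, lapl2, lapl3, lapl4, lapl5, lapl6] <;> norm_num
    · refine ⟨fun v => match v with | x1 => (0:ℂ) | x2 => (0:ℂ) | x3 => (0:ℂ) | x4 => (0:ℂ) | y0 => (-1:ℂ) | y1 => (0:ℂ) | y2 => (0:ℂ) | y3 => (0:ℂ) | y4 => (0:ℂ) | y5 => (1:ℂ) | y6 => (1:ℂ), ?_, ?_, ?_⟩
      · intro hzero
        have := congrFun hzero y5
        norm_num at this
      · intro i; fin_cases i <;> rfl
      · intro i; fin_cases i <;>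
          simp only [yv, lapl0, lapl1, lapl2, lapl3, lapl4, lapl5, lapl6] <;> norm_num
    · refine ⟨fun v => match v with | x1 => (0:ℂ) | x2 => (0:ℂ) | x3 => (0:ℂ) | x4 => (0:ℂ) | y0 => (0:ℂ) | y1 => (0:ℂ) | y2 => (-1:ℂ) | y3 => (1:ℂ) | y4 => (0:ℂ) | y5 => (0:ℂ) | y6 => (0:ℂ), ?_, ?_, ?_⟩
      · intro hzero
        have := congrFun hzero y3
        norm_num at this
      · intro i; fin_cases i <;> rfl
      · intro i; fin_cases i <;>
          simp only [yv, lapl0, lapl1, lapl2, lapl3, lapl4, lapl5, lapl6] <;> norm_num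
    · refine ⟨fun v => match v with | x1 => (0:ℂ) | x2 => (0:ℂ) | x3 => (0:ℂ) | x4 => (0:ℂ) | y0 => (2:ℂ) | y1 => (-1:ℂ) | y2 => (-1:ℂ) | y3 => (-1:ℂ) | y4 => (-1:ℂ) | y5 => (1:ℂ) | y6 => (1:ℂ), ?_, ?_, ?_⟩
      · intro hzero
        have := congrFun hzero y0
        norm_num at this
      · intro i; fin_cases i <;> rfl
      · intro i; fin_cases i <;>
          simp only [yv, lapl0, lapl1, lapl2, lapl3, lapl4, lapl5, lapl6] <;> norm_num

end SGpaper
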